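/- Let A : X → Y be a bounded linear operator between real Hilbert spaces and G : X → X be monotone (⟨G(x)−G(z), x−z⟩ ≥ 0 for all x,z). Fix α > 0, y₁, y₂ ∈ Y, and suppose x₁, x₂ ∈ X satisfy A*(A xᵢ − yᵢ) + α G(xᵢ) = 0 for i = 1,2. Then ‖A(x₁ − x₂)‖ ≤ ‖y₁ − y₂‖. -/
import Mathlib


open scoped InnerProductSpace

theorem stmt2 {X Y : Type*} [NormedAddCommGroup X] [InnerProductSpace ℝ X]
    [NormedAddCommGroup Y] [InnerProductSpace ℝ Y] [CompleteSpace X] [CompleteSpace Y]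
    (A : X →L[ℝ] Y) (G : X → X)
    (hmono : ∀ x z : X, 0 ≤ ⟪G x - G z, x - z⟫_ℝ)
    (α : ℝ) (hα : 0 < α) (y₁ y₂ : Y) (x₁ x₂ : X)
    (h₁ : (ContinuousLinearMap.adjoint A) (A x₁ - y₁) + α • G x₁ = 0)
    (h₂ : (ContinuousLinearMap.adjoint A) (A x₂ - y₂) + α • G x₂ = 0) :
    ‖A (x₁ - x₂)‖ ≤ ‖y₁ - y₂‖ := by
  set d := x₁ - x₂ with hd
  set u := A d with hu
  set v := y₁ - y₂ with hv
  have hsub : (ContinuousLinearMap.adjoint A) (u - v) + α • (G x₁ - G x₂) = 0 := by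
    have := congrArg₂ (· - ·) h₁ h₂
    simp only [sub_zero] at this
    rw [← this]
    simp [hu, hd, hv, smul_sub]
    abel
  have hkey : ⟪u - v, u⟫_ℝ + α * ⟪G x₁ - G x₂, d⟫_ℝ = 0 := by
    have h := congrArg (fun w => ⟪w, d⟫_ℝ) hsub
    simp only [inner_add_left, map_sub, inner_sub_left,
      ContinuousLinearMap.adjoint_inner_left, real_inner_smul_left, inner_zero_left] at h
    have h' := inner_sub_left (𝕜 := ℝ) u v u
    rw [← hu] at h
    have h'' := inner_sub_left (𝕜 := ℝ) (G x₁) (G x₂) d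
    rw [h', h'']
    exact h
  have h1 : ⟪u - v, u⟫_ℝ ≤ 0 := by
    have := mul_nonneg hα.le (hmono x₁ x₂)
    linarith
  have h2 : ‖u‖ ^ 2 ≤ ⟪v, u⟫_ℝ := by
    have h' := inner_sub_left (𝕜 := ℝ) u v u
    have hn := real_inner_self_eq_norm_sq u
    linarith
  have h3 : ⟪v, u⟫_ℝ ≤ ‖v‖ * ‖u‖ := real_inner_le_norm v u
  rcases eq_or_lt_of_le (norm_nonneg u) with h | h
  · rw [← h]; exact norm_nonneg v
  · nlinarith [h2, h3]
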